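/- Let X : {1,…,I₁}×{1,…,I₂}×{1,…,I₃} → ℝ be a third-order tensor, let B ∈ ℝ^{I₂×R}, C ∈ ℝ^{I₃×R}, and let M ∈ ℝ^{I₁×(I₃·I₂)} be the mode-1 unfolding of X, with entries M_{i,(k,j)} = X_{i,j,k}. Define F : ℝ^{I₁×R} → ℝ by F(A) = ½ Σ_{i,j,k} (X_{i,j,k} − Σ_{r=1}^R A_{i,r}B_{j,r}C_{k,r})². Then the gradient of F at A with respect to the Frobenius inner product equals A·((CᵀC) ∗ (BᵀB)) − M·(C ⊙ B), where ∗ is the Hadamard (entrywise) product and C ⊙ B ∈ ℝ^{(I₃·I₂)×R} is the Khatri–Rao product with entries (C ⊙ B)_{(k,j),r} = C_{k,r}B_{j,r}. -/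

import Mathlib

open Matrix

attribute [local instance] Matrix.frobeniusNormedAddCommGroup Matrix.frobeniusNormedSpace

noncomputable def entryCLM {I₁ R : ℕ} (i : Fin I₁) (w : Fin R → ℝ) :
    Matrix (Fin I₁) (Fin R) ℝ →L[ℝ] ℝ :=
  LinearMap.toContinuousLinearMap
    { toFun := fun H => ∑ r, H i r * w r
      map_add' := by
        intro x y
        simp [Matrix.add_apply, add_mul, Finset.sum_add_distrib]
      map_smul' := by
        intro c x
        simp [Matrix.smul_apply, Finset.mul_sum, mul_assoc] }

@[simp] lemma entryCLM_apply {I₁ R : ℕ} (i : Fin I₁) (w : Fin R → ℝ)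
    (H : Matrix (Fin I₁) (Fin R) ℝ) : entryCLM i w H = ∑ r, H i r * w r := rfl

theorem stmt19 (I₁ I₂ I₃ R : ℕ)
    (X : Fin I₁ → Fin I₂ → Fin I₃ → ℝ)
    (B : Matrix (Fin I₂) (Fin R) ℝ) (C : Matrix (Fin I₃) (Fin R) ℝ)
    (M : Matrix (Fin I₁) (Fin I₃ × Fin I₂) ℝ)
    (hM : ∀ i k j, M i (k, j) = X i j k)
    (K : Matrix (Fin I₃ × Fin I₂) (Fin R) ℝ)
    (hK : ∀ k j r, K (k, j) r = C k r * B j r)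
    (F : Matrix (Fin I₁) (Fin R) ℝ → ℝ)
    (hF : ∀ A, F A =
      (1 / 2) * ∑ i, ∑ j, ∑ k, (X i j k - ∑ r, A i r * B j r * C k r) ^ 2)
    (A : Matrix (Fin I₁) (Fin R) ℝ) :
    ∃ φ : Matrix (Fin I₁) (Fin R) ℝ →L[ℝ] ℝ,
      HasFDerivAt F φ A ∧
        ∀ H, φ H = ∑ i, ∑ r,
          (A * (Matrix.of fun r s => (Cᵀ * C) r s * (Bᵀ * B) r s) - M * K) i r
            * H i r := by
  set L : Fin I₁ → Fin I₂ → Fin I₃ → (Matrix (Fin I₁) (Fin R) ℝ →L[ℝ] ℝ) :=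
    fun i j k => entryCLM i (fun r => B j r * C k r) with hL
  have hLval : ∀ i j k (H : Matrix (Fin I₁) (Fin R) ℝ),
      L i j k H = ∑ r, H i r * B j r * C k r := by
    intro i j k H
    simp [hL, mul_assoc]
  set D : Fin I₁ → Fin I₂ → Fin I₃ → (Matrix (Fin I₁) (Fin R) ℝ →L[ℝ] ℝ) :=
    fun i j k => (2 * (X i j k - ∑ r, A i r * B j r * C k r)) • (-(L i j k)) with hD
  have h1 : ∀ i j k,
      HasFDerivAt (fun A : Matrix (Fin I₁) (Fin R) ℝ =>
        (X i j k - ∑ r, A i r * B j r * C k r) ^ 2) (D i j k) A := by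
    intro i j k
    have hinner : HasFDerivAt (fun A : Matrix (Fin I₁) (Fin R) ℝ =>
        X i j k - ∑ r, A i r * B j r * C k r) (-(L i j k)) A := by
      have := (L i j k).hasFDerivAt (x := A)
      have h' : HasFDerivAt (fun A' : Matrix (Fin I₁) (Fin R) ℝ =>
          ∑ r, A' i r * B j r * C k r) (L i j k) A := by
        convert this using 1
        funext A'
        exact (hLval i j k A').symm
      exact h'.const_sub _
    have hm := hinner.mul hinner
    have : (fun A : Matrix (Fin I₁) (Fin R) ℝ =>
        (X i j k - ∑ r, A i r * B j r * C k r) ^ 2)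
        = fun A => (X i j k - ∑ r, A i r * B j r * C k r)
            * (X i j k - ∑ r, A i r * B j r * C k r) := by
      funext A'; ring
    rw [this, hD]
    simp only [two_mul, add_smul]
    exact hm
  have h2 : HasFDerivAt F ((1/2 : ℝ) • ∑ i, ∑ j, ∑ k, D i j k) A := by
    have hFe : F = fun A => (1 / 2) * ∑ i, ∑ j, ∑ k,
        (X i j k - ∑ r, A i r * B j r * C k r) ^ 2 := funext hF
    rw [hFe]
    apply HasFDerivAt.const_mul
    apply HasFDerivAt.fun_sum; intro i _
    apply HasFDerivAt.fun_sum; intro j _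
    apply HasFDerivAt.fun_sum; intro k _
    exact h1 i j k
  refine ⟨_, h2, ?_⟩
  intro H
  have hval : ((1/2 : ℝ) • ∑ i, ∑ j, ∑ k, D i j k) H
      = ∑ i, ∑ j, ∑ k,
          ((∑ s, A i s * B j s * C k s) - X i j k) * (∑ r, H i r * B j r * C k r) := by
    simp only [ContinuousLinearMap.smul_apply, ContinuousLinearMap.sum_apply, hD,
      ContinuousLinearMap.neg_apply, smul_eq_mul, hLval, Finset.mul_sum]
    refine Finset.sum_congr rfl fun i _ => Finset.sum_congr rfl fun j _ =>
      Finset.sum_congr rfl fun k _ => ?_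
    rw [← Finset.mul_sum]
    ring
  rw [hval]
  have key : ∀ (i : Fin I₁) (r : Fin R),
      ∑ j, ∑ k, ((∑ s, A i s * B j s * C k s) - X i j k) * (B j r * C k r)
      = (A * (Matrix.of fun r s => (Cᵀ * C) r s * (Bᵀ * B) r s) - M * K) i r := by
    intro i r
    simp only [sub_mul, Finset.sum_sub_distrib, Finset.sum_mul, Matrix.sub_apply]
    congr 1
    · -- A-part
      rw [Matrix.mul_apply]
      have l1 : ∀ j : Fin I₂, (∑ k, ∑ s, A i s * B j s * C k s * (B j r * C k r))
          = ∑ s, ∑ k, A i s * B j s * C k s * (B j r * C k r) := fun j => Finset.sum_comm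
      simp only [l1]
      rw [Finset.sum_comm]
      refine Finset.sum_congr rfl fun s _ => ?_
      simp only [Matrix.of_apply, Matrix.mul_apply, Matrix.transpose_apply,
        Finset.sum_mul_sum, Finset.mul_sum]
      refine Finset.sum_congr rfl fun j _ => ?_
      rw [Finset.sum_mul, Finset.mul_sum]
      exact Finset.sum_congr rfl fun k _ => by ring
    · rw [Matrix.mul_apply, Fintype.sum_prod_type]
      rw [Finset.sum_comm]
      refine Finset.sum_congr rfl fun j _ => Finset.sum_congr rfl fun k _ => by
        rw [hM, hK]; ring
  calc ∑ i, ∑ j, ∑ k,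
          ((∑ s, A i s * B j s * C k s) - X i j k) * (∑ r, H i r * B j r * C k r)
      = ∑ i, ∑ r, (∑ j, ∑ k,
          ((∑ s, A i s * B j s * C k s) - X i j k) * (B j r * C k r)) * H i r := by
        refine Finset.sum_congr rfl fun i _ => ?_
        have e1 : ∀ j : Fin I₂, (∑ k, ((∑ s, A i s * B j s * C k s) - X i j k)
              * (∑ r, H i r * B j r * C k r))
            = ∑ r, ∑ k, ((∑ s, A i s * B j s * C k s) - X i j k)
              * (B j r * C k r) * H i r := by
          intro j
          rw [Finset.sum_comm (γ := Fin R)]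
          refine Finset.sum_congr rfl fun k _ => ?_
          rw [Finset.mul_sum]
          exact Finset.sum_congr rfl fun r _ => by ring
        simp only [e1]
        rw [Finset.sum_comm]
        exact Finset.sum_congr rfl fun r _ => by simp only [Finset.sum_mul]
    _ = ∑ i, ∑ r,
          (A * (Matrix.of fun r s => (Cᵀ * C) r s * (Bᵀ * B) r s) - M * K) i r
            * H i r := by
        exact Finset.sum_congr rfl fun i _ => Finset.sum_congr rfl fun r _ => by
          rw [key]
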